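/- Discrete energy variation identity: for states (h_i^n, v_i^n) and (h_i^{n+1}, v_i^{n+1}) with cell energies E_i = θ_i((1/2)|v_i|² h_i + (1/2)g h_i² + g z_i h_i) and w_i = g(z_i + h_i^n), the total energy difference satisfies Σ_i σ_i(E_i^{n+1} - E_i^n) = Σ_i θ_i σ_i (h_i^{n+1}-h_i^n)(w_i^n - |v_i^n|²/2) + Σ_i θ_i σ_i ⟨(hv)_i^{n+1} - (hv)_i^n, v_i^n⟩ + g Σ_i θ_i σ_i (h_i^{n+1}-h_i^n)²/2 + Σ_i θ_i σ_i (h_i^{n+1}/2)|v_i^{n+1} - v_i^n|². -/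
import Mathlib


open RealInnerProductSpace

/-- exact algebraic identity for the variation of the discrete total
energy between two consecutive time steps. -/
theorem discrete_energy_variation
    {ι : Type*} [Fintype ι]
    (σ θ z : ι → ℝ) (g : ℝ)
    (hσ : ∀ i, 0 < σ i) (hθ : ∀ i, θ i ∈ Set.Ioc (0:ℝ) 1) (hg : 0 < g)
    (hn hn1 : ι → ℝ) (hhn : ∀ i, 0 ≤ hn i) (hhn1 : ∀ i, 0 ≤ hn1 i)
    (vn vn1 : ι → EuclideanSpace ℝ (Fin 2))
    (w : ι → ℝ) (hw : ∀ i, w i = g * (z i + hn i)) :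
    ∑ i, σ i * (θ i * ((1/2) * ‖vn1 i‖^2 * hn1 i + (1/2) * g * (hn1 i)^2 + g * z i * hn1 i))
      - ∑ i, σ i * (θ i * ((1/2) * ‖vn i‖^2 * hn i + (1/2) * g * (hn i)^2 + g * z i * hn i))
    = ∑ i, θ i * σ i * (hn1 i - hn i) * (w i - ‖vn i‖^2 / 2)
      + ∑ i, θ i * σ i * ⟪hn1 i • vn1 i - hn i • vn i, vn i⟫
      + g * ∑ i, θ i * σ i * (hn1 i - hn i)^2 / 2
      + ∑ i, θ i * σ i * (hn1 i / 2) * ‖vn1 i - vn i‖^2 := by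
  simp only [Finset.mul_sum, ← Finset.sum_sub_distrib, ← Finset.sum_add_distrib]
  refine Finset.sum_congr rfl fun i _ => ?_
  have h1 : ⟪hn1 i • vn1 i - hn i • vn i, vn i⟫ = hn1 i * ⟪vn1 i, vn i⟫ - hn i * ‖vn i‖^2 := by
    simp only [inner_sub_left, real_inner_smul_left, real_inner_self_eq_norm_sq]
  have h2 : ‖vn1 i - vn i‖^2 = ‖vn1 i‖^2 - 2*⟪vn1 i, vn i⟫ + ‖vn i‖^2 := by
    rw [norm_sub_sq_real]
  rw [h1, h2, hw i]; ring
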